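/- Define the convolution φ ⋆ ψ = Σₙ (Σ_{k=0}^n C(n,k) aₖ bₙ₋ₖ) βₙ on C(ℤₚ, ℂₚ), where (aₖ), (bₗ) are the Mahler coefficients of φ, ψ. Then ⋆ is well-defined (the binomial convolution of null sequences is null), makes C(ℤₚ, ℂₚ) a commutative ℂₚ-algebra with identity the constant function 𝟙, and satisfies S(φ) ⋆ ψ = φ ⋆ S(ψ) for all φ, ψ. -/

import Mathlib

open Filter Finset

/-- The canonical embedding `ℤ_[p] → K` (where `K` plays the role of `ℂ_p`,
a complete nontrivially normed field extension of `ℚ_[p]`). -/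
noncomputable def pc (p : ℕ) [Fact p.Prime] (K : Type*) [NontriviallyNormedField K]
    [NormedAlgebra ℚ_[p] K] (x : ℤ_[p]) : K :=
  algebraMap ℚ_[p] K x

/-- The operator `S` : `S(f)(x) = f(x) - x·f(x-1)`. -/
noncomputable def Sop (p : ℕ) [Fact p.Prime] (K : Type*) [NontriviallyNormedField K]
    [NormedAlgebra ℚ_[p] K] (f : ℤ_[p] → K) : ℤ_[p] → K :=
  fun x => f x - pc p K x * f (x - 1)

/-- The Mahler basis function `βₙ(x) = C(x,n) = x(x-1)⋯(x-n+1)/n!`, valued in `K`. -/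
noncomputable def bK (p : ℕ) [Fact p.Prime] (K : Type*) [NontriviallyNormedField K]
    [NormedAlgebra ℚ_[p] K] (n : ℕ) (x : ℤ_[p]) : K :=
  (∏ i ∈ Finset.range n, (pc p K x - (i : K))) / (n.factorial : K)

/-- Binomial convolution of Mahler coefficient sequences:
`(a ⋆ b)ₙ = Σ_{k=0}^n C(n,k) aₖ bₙ₋ₖ`. -/
def conv (K : Type*) [NontriviallyNormedField K] (a b : ℕ → K) (n : ℕ) : K :=
  ∑ k ∈ Finset.range (n + 1), (n.choose k : K) * a k * b (n - k)

/-- The Mahler coefficients of `S φ` in terms of those of `φ`: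
`aₙ ↦ aₙ - n·aₙ₋₁` (with `a₋₁ = 0`). -/
def Scoeff (K : Type*) [NontriviallyNormedField K] (a : ℕ → K) (n : ℕ) : K :=
  a n - (n : K) * (if n = 0 then 0 else a (n - 1))

section Aux

variable {K : Type*} [NontriviallyNormedField K]

/-- Exponential generating function map. -/
noncomputable def Tmap (a : ℕ → K) : PowerSeries K :=
  PowerSeries.mk fun n => a n / (n.factorial : K)

lemma Tmap_inj [CharZero K] : Function.Injective (Tmap (K := K)) := by
  intro a b h
  funext n
  have h' := congrArg (PowerSeries.coeff n) h
  simp only [Tmap, PowerSeries.coeff_mk] at h'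
  have hf : (n.factorial : K) ≠ 0 := Nat.cast_ne_zero.mpr n.factorial_ne_zero
  field_simp at h'
  exact h'

lemma Tmap_conv [CharZero K] (a b : ℕ → K) : Tmap (conv K a b) = Tmap a * Tmap b := by
  ext n
  rw [PowerSeries.coeff_mul, Finset.Nat.sum_antidiagonal_eq_sum_range_succ_mk]
  simp only [Tmap, PowerSeries.coeff_mk, conv, Finset.sum_div]
  refine Finset.sum_congr rfl fun k hk => ?_
  have hk' : k ≤ n := Nat.lt_succ_iff.mp (Finset.mem_range.mp hk)
  rw [Nat.cast_choose K hk']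
  have h1 : (k.factorial : K) ≠ 0 := Nat.cast_ne_zero.mpr k.factorial_ne_zero
  have h2 : ((n - k).factorial : K) ≠ 0 := Nat.cast_ne_zero.mpr (n - k).factorial_ne_zero
  have h3 : (n.factorial : K) ≠ 0 := Nat.cast_ne_zero.mpr n.factorial_ne_zero
  field_simp

lemma Tmap_one [CharZero K] :
    Tmap (fun n => if n = 0 then (1 : K) else 0) = 1 := by
  ext n
  simp only [Tmap, PowerSeries.coeff_mk, PowerSeries.coeff_one]
  rcases eq_or_ne n 0 with rfl | hn
  · simp
  · simp [hn]

lemma Tmap_scoeff [CharZero K] (a : ℕ → K) :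
    Tmap (Scoeff K a) = (1 - PowerSeries.X) * Tmap a := by
  ext n
  rw [sub_mul, one_mul, map_sub]
  cases n with
  | zero => simp [Tmap, Scoeff]
  | succ m =>
    rw [PowerSeries.coeff_succ_X_mul]
    simp only [Tmap, PowerSeries.coeff_mk, Scoeff, Nat.succ_ne_zero, if_neg,
      Nat.add_sub_cancel, reduceIte]
    have h1 : (m.factorial : K) ≠ 0 := Nat.cast_ne_zero.mpr m.factorial_ne_zero
    have h2 : ((m + 1).factorial : K) ≠ 0 := Nat.cast_ne_zero.mpr (m + 1).factorial_ne_zero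
    have h3 : ((m + 1).factorial : K) = ((m : K) + 1) * (m.factorial : K) := by
      rw [Nat.factorial_succ]; push_cast; ring
    field_simp
    rw [h3]
    push_cast
    ring

end Aux

/-- The binomial convolution `⋆` of Mahler coefficients is
well-defined (the convolution of null sequences is null) and makes
`C(ℤ_[p], K)` a commutative `K`-algebra with identity the constant function
`𝟙` (whose Mahler coefficient sequence is `(1, 0, 0, …)`), and it satisfies
`S(φ) ⋆ ψ = φ ⋆ S(ψ)`. -/
theorem stmt_17 (p : ℕ) [Fact p.Prime] (K : Type*) [NontriviallyNormedField K]
    [NormedAlgebra ℚ_[p] K] [CompleteSpace K] :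
    (∀ a b : ℕ → K, Tendsto a atTop (nhds 0) → Tendsto b atTop (nhds 0) →
      Tendsto (conv K a b) atTop (nhds 0)) ∧
    (∀ a b : ℕ → K, conv K a b = conv K b a) ∧
    (∀ a b c : ℕ → K, conv K (conv K a b) c = conv K a (conv K b c)) ∧
    (∀ a a' b : ℕ → K, conv K (fun n => a n + a' n) b
      = fun n => conv K a b n + conv K a' b n) ∧
    (∀ (a b : ℕ → K) (c : K), conv K (fun n => c * a n) b = fun n => c * conv K a b n) ∧
    (∀ a : ℕ → K, conv K a (fun n => if n = 0 then 1 else 0) = a) ∧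
    (∀ a b : ℕ → K, conv K (Scoeff K a) b = conv K a (Scoeff K b)) := by
  haveI : CharZero K := charZero_of_injective_algebraMap (algebraMap ℚ_[p] K).injective
  haveI : IsUltrametricDist K := IsUltrametricDist.of_normedAlgebra ℚ_[p]
  refine ⟨?_, ?_, ?_, ?_, ?_, ?_, ?_⟩
  · -- null sequences
    intro a b ha hb
    obtain ⟨A, hA⟩ := ha.norm.bddAbove_range
    obtain ⟨B, hB⟩ := hb.norm.bddAbove_range
    set C := max A B with hC
    have hCa : ∀ k, ‖a k‖ ≤ C := fun k => (hA ⟨k, rfl⟩).trans (le_max_left _ _)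
    have hCb : ∀ k, ‖b k‖ ≤ C := fun k => (hB ⟨k, rfl⟩).trans (le_max_right _ _)
    have hC0 : 0 ≤ C := (norm_nonneg (a 0)).trans (hCa 0)
    rw [NormedAddCommGroup.tendsto_nhds_zero] at ha hb ⊢
    intro ε hε
    have hC1 : (0 : ℝ) < C + 1 := by linarith
    set δ := ε / (C + 1) with hδdef
    have hδ : 0 < δ := div_pos hε hC1
    obtain ⟨N₁, hN₁⟩ := (ha δ hδ).exists_forall_of_atTop
    obtain ⟨N₂, hN₂⟩ := (hb δ hδ).exists_forall_of_atTop
    filter_upwards [eventually_ge_atTop (N₁ + N₂)] with n hn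
    have key : ‖conv K a b n‖ ≤ δ * C := by
      refine IsUltrametricDist.norm_sum_le_of_forall_le_of_nonneg
        (mul_nonneg hδ.le hC0) fun k hk => ?_
      have hk' : k ≤ n := Nat.lt_succ_iff.mp (Finset.mem_range.mp hk)
      have hch : ‖((n.choose k : ℕ) : K)‖ ≤ 1 :=
        IsUltrametricDist.norm_natCast_le_one K _
      have hnorm : ‖(n.choose k : K) * a k * b (n - k)‖ ≤ ‖a k‖ * ‖b (n - k)‖ := by
        rw [norm_mul, norm_mul]
        calc ‖((n.choose k : ℕ) : K)‖ * ‖a k‖ * ‖b (n - k)‖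
            ≤ 1 * ‖a k‖ * ‖b (n - k)‖ := by
              gcongr
          _ = ‖a k‖ * ‖b (n - k)‖ := by ring
      refine hnorm.trans ?_
      rcases le_or_gt N₁ k with hkN | hkN
      · exact mul_le_mul (hN₁ k hkN).le (hCb _) (norm_nonneg _) hδ.le
      · have hnk : N₂ ≤ n - k := by omega
        calc ‖a k‖ * ‖b (n - k)‖ ≤ C * δ :=
              mul_le_mul (hCa k) (hN₂ _ hnk).le (norm_nonneg _) hC0
          _ = δ * C := mul_comm _ _
    refine key.trans_lt ?_
    rw [hδdef, div_mul_eq_mul_div, div_lt_iff₀ hC1]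
    nlinarith
  · intro a b
    apply Tmap_inj
    rw [Tmap_conv, Tmap_conv, mul_comm]
  · intro a b c
    apply Tmap_inj
    rw [Tmap_conv, Tmap_conv, Tmap_conv, Tmap_conv, mul_assoc]
  · intro a a' b
    funext n
    simp only [conv, ← Finset.sum_add_distrib]
    refine Finset.sum_congr rfl fun k _ => ?_
    ring
  · intro a b c
    funext n
    simp only [conv, Finset.mul_sum]
    refine Finset.sum_congr rfl fun k _ => ?_
    ring
  · intro a
    apply Tmap_inj
    rw [Tmap_conv, Tmap_one, mul_one]
  · intro a b
    apply Tmap_inj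
    rw [Tmap_conv, Tmap_conv, Tmap_scoeff, Tmap_scoeff, mul_assoc, mul_left_comm]
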